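/- Let k ≥ 2, n ≥ 1, 0 ≤ m < n, and let j = gcd(mk + k − 1, n + 1). The group G = ⟨α, β, y | α = y^{-k}β^{k-1}, [β, y^k] = 1, α(αβ)^m = 1, β(αβ)^{n-m} = 1⟩ has y^k central, and the quotient G/⟨⟨y^k⟩⟩ is isomorphic to the free product Z_k * Z_j. -/

import Mathlib

/-- `G = ⟨α, β, y | α = y^{-k}β^{k-1}, [β, y^k] = 1, α(αβ)^m = 1, β(αβ)^{n-m} = 1⟩`,
generators `α = of 0`, `β = of 1`, `y = of 2`. -/
def relsFam1 (k n m : ℕ) : Set (FreeGroup (Fin 3)) :=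
  let a := FreeGroup.of (0 : Fin 3)
  let b := FreeGroup.of (1 : Fin 3)
  let y := FreeGroup.of (2 : Fin 3)
  {a * ((y ^ k)⁻¹ * b ^ (k - 1))⁻¹,
   b * y ^ k * b⁻¹ * (y ^ k)⁻¹,
   a * (a * b) ^ m,
   b * (a * b) ^ (n - m)}

/-! ### Auxiliary lemmas -/

/-- Monoid hom out of `Multiplicative (ZMod N)` determined by an element whose
`N`-th power is `1`. -/
noncomputable def liftOfPow {G : Type*} [Group G] (N : ℕ) (g : G) (h : g ^ N = 1) :
    Multiplicative (ZMod N) →* G :=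
  AddMonoidHom.toMultiplicativeLeft
    (ZMod.lift N ⟨zmultiplesHom (Additive G) (Additive.ofMul g), by
      simp only [zmultiplesHom_apply, ← ofMul_zpow, zpow_natCast, h, ofMul_one]⟩)

theorem liftOfPow_intCast {G : Type*} [Group G] (N : ℕ) (g : G) (h : g ^ N = 1) (i : ℤ) :
    liftOfPow N g h (Multiplicative.ofAdd ((i : ℤ) : ZMod N)) = g ^ i := by
  simp [liftOfPow, AddMonoidHom.coe_toMultiplicativeLeft, ZMod.lift_coe, ← ofMul_zpow]

theorem liftOfPow_one' {G : Type*} [Group G] (N : ℕ) (g : G) (h : g ^ N = 1) :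
    liftOfPow N g h (Multiplicative.ofAdd 1) = g := by
  have := liftOfPow_intCast N g h 1
  simpa using this

theorem zmodHomExt {N : ℕ} {G : Type*} [Group G] {f g : Multiplicative (ZMod N) →* G}
    (h : f (Multiplicative.ofAdd 1) = g (Multiplicative.ofAdd 1)) : f = g := by
  refine MonoidHom.ext (fun a => ?_)
  obtain ⟨i, hi⟩ := ZMod.intCast_surjective (Multiplicative.toAdd a)
  have ha : a = Multiplicative.ofAdd ((i : ℤ) : ZMod N) := by rw [hi]; rfl
  have hone : ((i : ℤ) : ZMod N) = i • (1 : ZMod N) := by simp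
  rw [ha, hone, ofAdd_zsmul, map_zpow, map_zpow, h]

theorem zmodGenPow (N t : ℕ) :
    (Multiplicative.ofAdd (1 : ZMod N)) ^ t = Multiplicative.ofAdd ((t : ZMod N)) := by
  rw [← ofAdd_nsmul, nsmul_eq_mul, mul_one]

theorem zmodGenPow_eq_one (N t : ℕ) (h : N ∣ t) :
    (Multiplicative.ofAdd (1 : ZMod N)) ^ t = 1 := by
  rw [zmodGenPow, (ZMod.natCast_eq_zero_iff t N).mpr h]; rfl

theorem powHelper1 {G : Type*} [Group G] (g : G) (a b : ℕ) :
    g ^ a * (g ^ a * g) ^ b = g ^ (a + (a + 1) * b) := by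
  rw [← pow_succ, ← pow_mul, ← pow_add]

theorem powHelper2 {G : Type*} [Group G] (g : G) (a b : ℕ) :
    g * (g ^ a * g) ^ b = g ^ (1 + (a + 1) * b) := by
  rw [← pow_succ, ← pow_mul, pow_add, pow_one]

section Rels

variable (k n m : ℕ)

theorem relsFam1_hold : ∀ r ∈ relsFam1 k n m,
    (PresentedGroup.mk (relsFam1 k n m) r : PresentedGroup (relsFam1 k n m)) = 1 :=
  fun _ hr => (QuotientGroup.eq_one_iff _).mpr (Subgroup.subset_normalClosure hr)

theorem relsFam1_rel1 : (PresentedGroup.of 0 : PresentedGroup (relsFam1 k n m)) =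
    ((PresentedGroup.of 2 : PresentedGroup (relsFam1 k n m)) ^ k)⁻¹ *
      (PresentedGroup.of 1) ^ (k - 1) := by
  have := relsFam1_hold k n m (FreeGroup.of 0 *
      (((FreeGroup.of 2 : FreeGroup (Fin 3)) ^ k)⁻¹ * (FreeGroup.of 1) ^ (k - 1))⁻¹)
    (by simp [relsFam1])
  simp only [map_mul, map_inv, map_pow] at this
  rw [mul_inv_eq_one] at this
  exact this

theorem relsFam1_rel2 : Commute (PresentedGroup.of 1 : PresentedGroup (relsFam1 k n m))
    ((PresentedGroup.of 2 : PresentedGroup (relsFam1 k n m)) ^ k) := by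
  have := relsFam1_hold k n m (FreeGroup.of 1 * (FreeGroup.of 2 : FreeGroup (Fin 3)) ^ k *
      (FreeGroup.of 1)⁻¹ * ((FreeGroup.of 2 : FreeGroup (Fin 3)) ^ k)⁻¹)
    (by simp [relsFam1])
  simp only [map_mul, map_inv, map_pow] at this
  rw [mul_inv_eq_one, mul_inv_eq_iff_eq_mul] at this
  exact this

theorem relsFam1_rel3 : (PresentedGroup.of 0 : PresentedGroup (relsFam1 k n m)) *
    ((PresentedGroup.of 0 : PresentedGroup (relsFam1 k n m)) * PresentedGroup.of 1) ^ m = 1 := by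
  have := relsFam1_hold k n m (FreeGroup.of 0 *
      ((FreeGroup.of 0 : FreeGroup (Fin 3)) * FreeGroup.of 1) ^ m) (by simp [relsFam1])
  simp only [map_mul, map_pow] at this
  exact this

theorem relsFam1_rel4 : (PresentedGroup.of 1 : PresentedGroup (relsFam1 k n m)) *
    ((PresentedGroup.of 0 : PresentedGroup (relsFam1 k n m)) * PresentedGroup.of 1) ^ (n - m)
      = 1 := by
  have := relsFam1_hold k n m (FreeGroup.of 1 *
      ((FreeGroup.of 0 : FreeGroup (Fin 3)) * FreeGroup.of 1) ^ (n - m)) (by simp [relsFam1])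
  simp only [map_mul, map_pow] at this
  exact this

theorem relsFam1_central : (PresentedGroup.of 2 : PresentedGroup (relsFam1 k n m)) ^ k ∈
    Subgroup.center (PresentedGroup (relsFam1 k n m)) := by
  rw [Subgroup.mem_center_iff]
  intro g
  have hg : g ∈ Subgroup.centralizer
      {(PresentedGroup.of 2 : PresentedGroup (relsFam1 k n m)) ^ k} := by
    refine PresentedGroup.generated_by _ _ (fun i => ?_) g
    rw [Subgroup.mem_centralizer_singleton_iff]
    fin_cases i
    · show Commute (PresentedGroup.of (0 : Fin 3) : PresentedGroup (relsFam1 k n m))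
        (PresentedGroup.of 2 ^ k)
      rw [relsFam1_rel1]
      exact Commute.mul_left ((Commute.refl _).inv_left) ((relsFam1_rel2 k n m).pow_left _)
    · exact relsFam1_rel2 k n m
    · exact (Commute.refl _).pow_right _
  exact Subgroup.mem_centralizer_singleton_iff.mp hg

end Rels

section Arith

theorem arith_key {k n m : ℕ} (hk : 1 ≤ k) (hm : m ≤ n) :
    (m * k + k - 1) + ((n - m) * k + 1) = k * (n + 1) := by
  have h1 : k * (n + 1) = m * k + (n - m) * k + k := by
    conv_lhs => rw [← Nat.sub_add_cancel hm]
    ring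
  omega

theorem arith_coprime {k m : ℕ} (hk : 1 ≤ k) : Nat.gcd (m * k + k - 1) k = 1 := by
  have h2 : m * k + k - 1 + 1 = (m + 1) * k := by
    have : (m + 1) * k = m * k + k := by ring
    omega
  have hd : Nat.gcd (m * k + k - 1) k ∣ 1 := by
    have hA := Nat.gcd_dvd_left (m * k + k - 1) k
    have hk' : Nat.gcd (m * k + k - 1) k ∣ m * k + k - 1 + 1 :=
      h2 ▸ (Nat.gcd_dvd_right (m * k + k - 1) k).mul_left (m + 1)
    simpa using Nat.dvd_sub hk' hA
  exact Nat.dvd_one.mp hd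

theorem arith_gcd_dvd_j {k n m j : ℕ} (hk : 1 ≤ k) (hm : m ≤ n)
    (hj : j = Nat.gcd (m * k + k - 1) (n + 1)) :
    Nat.gcd (m * k + k - 1) ((n - m) * k + 1) ∣ j := by
  set d := Nat.gcd (m * k + k - 1) ((n - m) * k + 1) with hd
  have hdkn : d ∣ k * (n + 1) := by
    rw [← arith_key hk hm]
    exact Nat.dvd_add (Nat.gcd_dvd_left _ _) (Nat.gcd_dvd_right _ _)
  have hcop : Nat.Coprime d k :=
    Nat.Coprime.coprime_dvd_left (Nat.gcd_dvd_left _ _) (arith_coprime hk)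
  have hdn : d ∣ n + 1 := hcop.dvd_of_dvd_mul_left hdkn
  rw [hj]
  exact Nat.dvd_gcd (Nat.gcd_dvd_left _ _) hdn

theorem arith_j_dvd_Bv {k n m j : ℕ} (hk : 1 ≤ k) (hm : m ≤ n)
    (hj : j = Nat.gcd (m * k + k - 1) (n + 1)) : j ∣ (n - m) * k + 1 := by
  have hkey := arith_key (k := k) (n := n) (m := m) hk hm
  have hBv : (n - m) * k + 1 = k * (n + 1) - (m * k + k - 1) := by omega
  rw [hBv]
  exact Nat.dvd_sub ((hj ▸ Nat.gcd_dvd_right _ _ : j ∣ n + 1).mul_left k)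
    (hj ▸ Nat.gcd_dvd_left _ _)

end Arith

/-- In the group of the curves of family (1), `y^k` is central and the quotient by
its normal closure is `ℤ/k ∗ ℤ/j`, where `j = gcd(mk + k − 1, n + 1)`. -/
theorem stmt_13 (k n m : ℕ) (hk : 2 ≤ k) (hn : 1 ≤ n) (hm : m < n)
    (j : ℕ) (hj : j = Nat.gcd (m * k + k - 1) (n + 1)) :
    ((PresentedGroup.of 2 : PresentedGroup (relsFam1 k n m)) ^ k ∈
      Subgroup.center (PresentedGroup (relsFam1 k n m))) ∧
    Nonempty
      ((PresentedGroup (relsFam1 k n m) ⧸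
          Subgroup.normalClosure
            ({(PresentedGroup.of 2 : PresentedGroup (relsFam1 k n m)) ^ k} :
              Set (PresentedGroup (relsFam1 k n m)))) ≃*
        Monoid.Coprod (Multiplicative (ZMod k)) (Multiplicative (ZMod j))) := by
  have hk1 : 1 ≤ k := by omega
  have hm' : m ≤ n := hm.le
  refine ⟨relsFam1_central k n m, ?_⟩
  -- notation
  set R := relsFam1 k n m with hR
  set Nc : Subgroup (PresentedGroup R) :=
    Subgroup.normalClosure ({(PresentedGroup.of 2 : PresentedGroup R) ^ k} :
      Set (PresentedGroup R)) with hNc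
  set C := Monoid.Coprod (Multiplicative (ZMod k)) (Multiplicative (ZMod j)) with hC
  set x : Multiplicative (ZMod k) := Multiplicative.ofAdd 1 with hx
  set z : Multiplicative (ZMod j) := Multiplicative.ofAdd 1 with hz
  -- exponent facts
  have hjA : j ∣ m * k + k - 1 := hj ▸ Nat.gcd_dvd_left _ _
  have hjBv : j ∣ (n - m) * k + 1 := arith_j_dvd_Bv hk1 hm' hj
  have hxk : x ^ k = 1 := zmodGenPow_eq_one k k dvd_rfl
  have hzA : z ^ (m * k + k - 1) = 1 := zmodGenPow_eq_one j _ hjA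
  have hzBv : z ^ ((n - m) * k + 1) = 1 := zmodGenPow_eq_one j _ hjBv
  have hE1 : (k - 1) + ((k - 1) + 1) * m = m * k + k - 1 := by
    have : ((k - 1) + 1) = k := by omega
    rw [this]
    have h2 : k * m = m * k := Nat.mul_comm k m
    omega
  have hE2 : 1 + ((k - 1) + 1) * (n - m) = (n - m) * k + 1 := by
    have : ((k - 1) + 1) = k := by omega
    rw [this]
    have h2 : k * (n - m) = (n - m) * k := Nat.mul_comm _ _
    omega
  -- the map φ : Q →* C
  set f : Fin 3 → C := ![Monoid.Coprod.inr z ^ (k - 1), Monoid.Coprod.inr z,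
    Monoid.Coprod.inl x] with hf
  have hf0 : f 0 = Monoid.Coprod.inr z ^ (k - 1) := rfl
  have hf1 : f 1 = Monoid.Coprod.inr z := rfl
  have hf2 : f 2 = Monoid.Coprod.inl x := rfl
  have hxkC : (Monoid.Coprod.inl x : C) ^ k = 1 := by
    rw [← map_pow, hxk, map_one]
  have hrelsC : ∀ r ∈ R, FreeGroup.lift f r = 1 := by
    intro r hr
    rw [hR] at hr
    simp only [relsFam1, Set.mem_insert_iff, Set.mem_singleton_iff] at hr
    rcases hr with rfl | rfl | rfl | rfl
    · simp only [map_mul, map_inv, map_pow, FreeGroup.lift_apply_of, hf0, hf1, hf2]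
      rw [hxkC]
      simp
    · simp only [map_mul, map_inv, map_pow, FreeGroup.lift_apply_of, hf0, hf1, hf2]
      rw [hxkC]
      simp
    · simp only [map_mul, map_pow, FreeGroup.lift_apply_of, hf0, hf1, hf2]
      rw [powHelper1, hE1, ← map_pow, hzA, map_one]
    · simp only [map_mul, map_pow, FreeGroup.lift_apply_of, hf0, hf1, hf2]
      rw [powHelper2, hE2, ← map_pow, hzBv, map_one]
  set φ0 : PresentedGroup R →* C := PresentedGroup.toGroup hrelsC with hφ0
  have hφ0of : ∀ i : Fin 3, φ0 (PresentedGroup.of i) = f i := fun i =>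
    PresentedGroup.toGroup.of hrelsC
  have hφ0Yk : φ0 ((PresentedGroup.of 2 : PresentedGroup R) ^ k) = 1 := by
    rw [map_pow, hφ0of, hf2, hxkC]
  have hNcker : ∀ g ∈ Nc, φ0 g = 1 := by
    intro g hg
    refine MonoidHom.mem_ker.mp (Subgroup.normalClosure_le_normal ?_ hg)
    rw [Set.singleton_subset_iff]
    exact MonoidHom.mem_ker.mpr hφ0Yk
  set φ : (PresentedGroup R ⧸ Nc) →* C := QuotientGroup.lift Nc φ0 hNcker with hφ
  -- the map ψ : C →* Q
  set π : PresentedGroup R →* PresentedGroup R ⧸ Nc := QuotientGroup.mk' Nc with hπ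
  have hπof : ∀ g ∈ Nc, π g = 1 := fun g hg => (QuotientGroup.eq_one_iff g).mpr hg
  have hYQ : (π (PresentedGroup.of 2)) ^ k = 1 := by
    rw [← map_pow]
    exact hπof _ (Subgroup.subset_normalClosure (Set.mem_singleton _))
  have hAB : π (PresentedGroup.of 0) = (π (PresentedGroup.of 1)) ^ (k - 1) := by
    rw [relsFam1_rel1 k n m, map_mul, map_inv, map_pow, map_pow, hYQ]
    simp
  have hBA : (π (PresentedGroup.of 1)) ^ (m * k + k - 1) = 1 := by
    have h3 := congrArg π (relsFam1_rel3 k n m)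
    rw [map_mul, map_pow, map_mul, map_one, hAB, powHelper1, hE1] at h3
    exact h3
  have hBBv : (π (PresentedGroup.of 1)) ^ ((n - m) * k + 1) = 1 := by
    have h4 := congrArg π (relsFam1_rel4 k n m)
    rw [map_mul, map_pow, map_mul, map_one, hAB, powHelper2, hE2] at h4
    exact h4
  have hBj : (π (PresentedGroup.of 1)) ^ j = 1 := by
    rw [← orderOf_dvd_iff_pow_eq_one]
    exact dvd_trans (Nat.dvd_gcd (orderOf_dvd_of_pow_eq_one hBA)
      (orderOf_dvd_of_pow_eq_one hBBv)) (arith_gcd_dvd_j hk1 hm' hj)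
  set ψ : C →* (PresentedGroup R ⧸ Nc) :=
    Monoid.Coprod.lift (liftOfPow k (π (PresentedGroup.of 2)) hYQ)
      (liftOfPow j (π (PresentedGroup.of 1)) hBj) with hψ
  have hψx : ψ (Monoid.Coprod.inl x) = π (PresentedGroup.of 2) := by
    rw [hψ, Monoid.Coprod.lift_apply_inl, hx, liftOfPow_one']
  have hψz : ψ (Monoid.Coprod.inr z) = π (PresentedGroup.of 1) := by
    rw [hψ, Monoid.Coprod.lift_apply_inr, hz, liftOfPow_one']
  have hφπ : ∀ g, φ (π g) = φ0 g := fun g => rfl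
  -- φ ∘ ψ = id
  have hφψ : φ.comp ψ = MonoidHom.id C := by
    refine Monoid.Coprod.hom_ext (zmodHomExt ?_) (zmodHomExt ?_)
    · show φ (ψ (Monoid.Coprod.inl x)) = Monoid.Coprod.inl x
      rw [hψx, hφπ, hφ0of, hf2]
    · show φ (ψ (Monoid.Coprod.inr z)) = Monoid.Coprod.inr z
      rw [hψz, hφπ, hφ0of, hf1]
  -- ψ ∘ φ = id
  have hρ : Function.Surjective (π.comp (PresentedGroup.mk R)) :=
    (QuotientGroup.mk'_surjective Nc).comp (PresentedGroup.mk_surjective R)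
  have hψφ : ψ.comp φ = MonoidHom.id _ := by
    have hcomp : (ψ.comp φ).comp (π.comp (PresentedGroup.mk R)) =
        π.comp (PresentedGroup.mk R) := by
      refine FreeGroup.ext_hom _ _ (fun i => ?_)
      fin_cases i
      · show ψ (φ (π (PresentedGroup.of (0 : Fin 3)))) = π (PresentedGroup.of (0 : Fin 3))
        rw [hφπ, hφ0of, hf0, map_pow, hψz, ← hAB]
      · show ψ (φ (π (PresentedGroup.of (1 : Fin 3)))) = π (PresentedGroup.of (1 : Fin 3))
        rw [hφπ, hφ0of, hf1, hψz]
      · show ψ (φ (π (PresentedGroup.of (2 : Fin 3)))) = π (PresentedGroup.of (2 : Fin 3))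
        rw [hφπ, hφ0of, hf2, hψx]
    refine MonoidHom.ext (fun q => ?_)
    obtain ⟨w, rfl⟩ := hρ q
    exact DFunLike.congr_fun hcomp w
  exact ⟨MonoidHom.toMulEquiv φ ψ hψφ hφψ⟩
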